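/- Suppose αₙ, …, α₁, α₀ are countable ordinals with αᵢ < γ for all i, where γ is an epsilon number. Then k(σ(Ω^n·αₙ + … + Ω·α₁ + α₀)) < γ, where σ(δ) denotes the maximal order type of δ* given by Schmidt's formula: σ(δ) = ω^(ω^(δ−1)) if δ is finite and positive, σ(δ) = ω^(ω^(δ+1)) if δ = ε + m with ε an epsilon number and m < ω, and σ(δ) = ω^(ω^δ) otherwise. -/

import Mathlib

/-- `Ω`, the first uncountable ordinal `ω₁`. -/
noncomputable def Omega1 : Ordinal.{0} := (Cardinal.aleph 1).ord

/-- `KMem β α` expresses `β ∈ K(α)`, where `K(0) = {0}` and, for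
`α = Ω^{α₁}·β₁ + … + Ω^{αₙ}·βₙ` in base-`Ω` Cantor normal form,
`K(α) = {β₁,…,βₙ} ∪ K(α₁) ∪ … ∪ K(αₙ)`. -/
inductive KMem : Ordinal.{0} → Ordinal.{0} → Prop
  | zero : KMem 0 0
  | coeff {α e c : Ordinal.{0}} : (e, c) ∈ Ordinal.CNF Omega1 α → KMem c α
  | expo {α e c β : Ordinal.{0}} : (e, c) ∈ Ordinal.CNF Omega1 α → KMem β e → KMem β α

/-- `k(α) = max K(α)` (as a supremum; `K(α)` is finite for `α < ε_{Ω+1}`). -/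
noncomputable def kMax (α : Ordinal.{0}) : Ordinal.{0} := sSup {β | KMem β α}

/-- Membership in `P`, the class of additively closed ordinals `{ω^ξ : ξ ∈ On}`. -/
def AddClosed (ζ : Ordinal.{0}) : Prop := ∃ ξ : Ordinal.{0}, ζ = Ordinal.omega0 ^ ξ

/-- The collapsing function `ϑ`: `ϑ(α)` is the least `ζ ∈ P` such that `k(α) < ζ` and
for all `β < α` with `k(β) < ζ` one has `ϑ(β) < ζ`. -/
noncomputable def theta : Ordinal.{0} → Ordinal.{0} :=
  Ordinal.lt_wf.fix (C := fun _ => Ordinal.{0}) fun α IH =>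
    sInf {ζ : Ordinal.{0} | AddClosed ζ ∧ kMax α < ζ ∧
      ∀ (β : Ordinal.{0}) (h : β < α), kMax β < ζ → IH β h < ζ}

/-- `ε_{Ω+1}`, the least epsilon number above `Ω`. -/
noncomputable def epsOmega1 : Ordinal.{0} :=
  Ordinal.nfp (fun a => Ordinal.omega0 ^ a) (Omega1 + 1)

/-- The tower `Ω_n[1]`: `Ω_0[1] = 1` and `Ω_{n+1}[1] = Ω ^ Ω_n[1]`. -/
noncomputable def OmegaTower : ℕ → Ordinal.{0}
  | 0 => 1
  | nn + 1 => Omega1 ^ OmegaTower nn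

/-- The Howard–Bachmann ordinal `ϑ(ε_{Ω+1}) = sup_{n<ω} ϑ(Ω_n[1])`. -/
noncomputable def HowardBachmann : Ordinal.{0} := ⨆ nn : ℕ, theta (OmegaTower nn)

open Classical in
/-- Schmidt's formula `σ(δ)` for the maximal order type `o(X*)` of the Higman ordering
on finite sequences over a wpo `X` with `o(X) = δ`. -/
noncomputable def sigmaStar (δ : Ordinal.{0}) : Ordinal.{0} :=
  if 0 < δ ∧ δ < Ordinal.omega0 then
    Ordinal.omega0 ^ (Ordinal.omega0 ^ (δ - 1))
  else if ∃ (ε : Ordinal.{0}) (mm : ℕ), Ordinal.omega0 ^ ε = ε ∧ δ = ε + (mm : Ordinal) then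
    Ordinal.omega0 ^ (Ordinal.omega0 ^ (δ + 1))
  else
    Ordinal.omega0 ^ (Ordinal.omega0 ^ δ)

/-- The polynomial `Ω^n·αₙ + … + Ω·α₁ + α₀`. -/
noncomputable def omegaPolySum (a : ℕ → Ordinal.{0}) : ℕ → Ordinal.{0}
  | 0 => a 0
  | nn + 1 => Omega1 ^ ((nn + 1 : ℕ) : Ordinal) * a (nn + 1) + omegaPolySum a nn

/-! ### Auxiliary lemmas -/

section Aux

open Ordinal

lemma omega0_lt_Omega1 : Ordinal.omega0 < Omega1 := by
  rw [Omega1, Cardinal.ord_aleph]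
  exact Ordinal.omega0_lt_omega_one

lemma one_lt_Omega1 : 1 < Omega1 := Ordinal.one_lt_omega0.trans omega0_lt_Omega1
lemma Omega1_pos : 0 < Omega1 := zero_lt_one.trans one_lt_Omega1
lemma Omega1_ne_zero : Omega1 ≠ 0 := Omega1_pos.ne'
lemma isLimit_Omega1 : Order.IsSuccLimit Omega1 := Cardinal.isSuccLimit_ord (Cardinal.aleph0_le_aleph 1)

lemma add_lt_Omega1 {x y : Ordinal.{0}} (hx : x < Omega1) (hy : y < Omega1) : x + y < Omega1 :=
  Ordinal.isPrincipal_add_ord (Cardinal.aleph0_le_aleph 1) hx hy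

lemma cof_Omega1 : Omega1.cof = Cardinal.aleph 1 := by
  rw [Omega1]
  exact Cardinal.isRegular_aleph_one.cof_eq

lemma opow_lt_Omega1 : ∀ {b : Ordinal.{0}}, b < Omega1 → Ordinal.omega0 ^ b < Omega1 := by
  intro b
  induction b using Ordinal.limitRecOn with
  | zero => intro _; simpa using one_lt_Omega1
  | add_one c ih =>
    intro h
    have hc : c < Omega1 := (Order.lt_succ_of_le le_rfl).trans h
    rw [Ordinal.opow_add_one, Omega1, Cardinal.lt_ord, Ordinal.card_mul]
    have h1 : (Ordinal.omega0 ^ c).card < Cardinal.aleph 1 := by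
      rw [← Cardinal.lt_ord]; exact ih hc
    have h2 : (Ordinal.omega0).card < Cardinal.aleph 1 := by
      rw [← Cardinal.lt_ord]; exact omega0_lt_Omega1
    exact Cardinal.mul_lt_of_lt (Cardinal.aleph0_le_aleph 1) h1 h2
  | limit c hc ih =>
    intro h
    rw [Ordinal.opow_limit Ordinal.omega0_ne_zero hc]
    apply Ordinal.lift_iSup_lt_of_lt_cof ?_ ?_
    · rw [Cardinal.lift_uzero, ← Ordinal.lift_cof, cof_Omega1, Cardinal.mk_Iio_ordinal,
        Cardinal.lift_lt, ← Cardinal.lt_ord]; exact h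
    · exact fun i => ih i.1 i.2 (i.2.trans h)

lemma omega0_opow_Omega1 : Ordinal.omega0 ^ Omega1 = Omega1 := by
  apply le_antisymm
  · exact (Ordinal.opow_le_of_isSuccLimit Ordinal.omega0_ne_zero isLimit_Omega1).2
      fun c hc => (opow_lt_Omega1 hc).le
  · exact Ordinal.right_le_opow _ Ordinal.one_lt_omega0

lemma CNF_snd_le' {b o : Ordinal.{0}} {x : Ordinal × Ordinal} (h : x ∈ Ordinal.CNF b o) :
    x.2 ≤ o := by
  revert h
  refine Ordinal.CNF.rec b ?_ (fun o ho IH => ?_) o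
  · simp [Ordinal.CNF.zero_right]
  · rw [Ordinal.CNF.ne_zero ho, List.mem_cons]
    rintro (rfl | h)
    · by_cases hb : b ^ Ordinal.log b o = 0
      · simp [hb]
      · exact Ordinal.div_le_of_le_mul (Ordinal.le_mul_right o (pos_iff_ne_zero.2 hb))
    · exact (IH h).trans (Ordinal.mod_le _ _)

lemma CNF_cons {b e c r : Ordinal.{0}} (hb : 1 < b) (hc : c ≠ 0) (hcb : c < b)
    (hr : r < b ^ e) : Ordinal.CNF b (b ^ e * c + r) = (e, c) :: Ordinal.CNF b r := by
  have hbe : b ^ e ≠ 0 := Ordinal.opow_ne_zero e (zero_lt_one.trans hb).ne'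
  have ho : b ^ e * c + r ≠ 0 := by
    intro h
    rw [Ordinal.add_eq_zero_iff, mul_eq_zero] at h
    rcases h.1 with h' | h'
    · exact hbe h'
    · exact hc h'
  have hlog : Ordinal.log b (b ^ e * c + r) = e := by
    rw [Ordinal.log_opow_mul_add hb hc hr, Ordinal.log_eq_zero hcb, add_zero]
  rw [Ordinal.CNF.ne_zero ho, hlog]
  congr 1
  · rw [Ordinal.mul_add_div _ hbe, Ordinal.div_eq_zero_of_lt hr, add_zero]
  · rw [Ordinal.mul_add_mod_self, Ordinal.mod_eq_of_lt hr]

/-- Every element of `K(α)` is at most `α`. -/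
lemma KMem_le {β α : Ordinal.{0}} (h : KMem β α) : β ≤ α := by
  induction h with
  | zero => exact le_rfl
  | coeff h => exact CNF_snd_le' h
  | expo h _ ih =>
    exact ih.trans ((Ordinal.CNF.fst_le_log h).trans (Ordinal.log_le_self _ _))

lemma poly_lt : ∀ (k : ℕ) (a : ℕ → Ordinal.{0}), (∀ i ≤ k, a i < Omega1) →
    omegaPolySum a k < Omega1 ^ ((k : Ordinal) + 1)
  | 0, a, h => by
    simpa [omegaPolySum, Ordinal.opow_one] using h 0 le_rfl
  | k + 1, a, h => by
    have IH := poly_lt k a (fun i hi => h i (hi.trans (Nat.le_succ k)))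
    have hcast : ((k : Ordinal) + 1) = ((k + 1 : ℕ) : Ordinal) := by push_cast; rfl
    rw [hcast] at IH
    show Omega1 ^ ((k + 1 : ℕ) : Ordinal) * a (k + 1) + omegaPolySum a k < _
    calc Omega1 ^ ((k + 1 : ℕ) : Ordinal) * a (k + 1) + omegaPolySum a k
        < Omega1 ^ ((k + 1 : ℕ) : Ordinal) * a (k + 1) + Omega1 ^ ((k + 1 : ℕ) : Ordinal) :=
          add_lt_add_right IH _
      _ = Omega1 ^ ((k + 1 : ℕ) : Ordinal) * (a (k + 1) + 1) := by rw [mul_add, mul_one]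
      _ ≤ Omega1 ^ ((k + 1 : ℕ) : Ordinal) * Omega1 :=
          mul_le_mul_right (Order.add_one_le_iff.2 (h (k + 1) le_rfl)) _
      _ = Omega1 ^ (((k + 1 : ℕ) : Ordinal) + 1) := by
          rw [← Ordinal.opow_succ, Ordinal.add_one_eq_succ]

lemma poly_shift : ∀ (k : ℕ) (a : ℕ → Ordinal.{0}),
    omegaPolySum a (k + 1) = Omega1 * omegaPolySum (fun i => a (i + 1)) k + a 0
  | 0, a => by
    show Omega1 ^ ((1 : ℕ) : Ordinal) * a 1 + a 0 = Omega1 * a 1 + a 0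
    rw [Nat.cast_one, Ordinal.opow_one]
  | k + 1, a => by
    show Omega1 ^ ((k + 1 + 1 : ℕ) : Ordinal) * a (k + 1 + 1) + omegaPolySum a (k + 1) = _
    rw [poly_shift k a]
    show _ = Omega1 * (Omega1 ^ ((k + 1 : ℕ) : Ordinal) * a (k + 1 + 1) +
      omegaPolySum (fun i => a (i + 1)) k) + a 0
    have hcast : ((k + 1 + 1 : ℕ) : Ordinal) = 1 + ((k + 1 : ℕ) : Ordinal) := by
      rw [show k + 1 + 1 = 1 + (k + 1) from by omega, Nat.cast_add, Nat.cast_one]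
    rw [hcast, Ordinal.opow_add, Ordinal.opow_one, mul_add, mul_assoc]
    exact (add_assoc _ _ _).symm

lemma poly_eq_a0 : ∀ (k : ℕ) (a : ℕ → Ordinal.{0}), (∀ i, 1 ≤ i → i ≤ k → a i = 0) →
    omegaPolySum a k = a 0
  | 0, a, _ => rfl
  | k + 1, a, h => by
    show Omega1 ^ ((k + 1 : ℕ) : Ordinal) * a (k + 1) + omegaPolySum a k = a 0
    rw [h (k + 1) (by omega) le_rfl, mul_zero, zero_add]
    exact poly_eq_a0 k a (fun i h1 h2 => h i h1 (by omega))

lemma poly_ne_zero : ∀ (k : ℕ) (a : ℕ → Ordinal.{0}) (j : ℕ), j ≤ k → a j ≠ 0 →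
    omegaPolySum a k ≠ 0
  | 0, a, j, hj, ha => by
    obtain rfl : j = 0 := Nat.le_zero.1 hj
    exact ha
  | k + 1, a, j, hj, ha => by
    show Omega1 ^ ((k + 1 : ℕ) : Ordinal) * a (k + 1) + omegaPolySum a k ≠ 0
    intro h
    rw [Ordinal.add_eq_zero_iff] at h
    by_cases hjk : j ≤ k
    · exact poly_ne_zero k a j hjk ha h.2
    · obtain rfl : j = k + 1 := by omega
      rw [mul_eq_zero] at h
      rcases h.1.resolve_left (Ordinal.opow_ne_zero _ Omega1_ne_zero) with h'
      exact ha h'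

lemma poly_bound : ∀ (k : ℕ) (a : ℕ → Ordinal.{0}) (m : Ordinal.{0}),
    (∀ i ≤ k, a i < Omega1) → (∀ i ≤ k, a i ≤ m) → ((k : Ordinal) ≤ m) →
    ∀ β, KMem β (omegaPolySum a k) → β ≤ m
  | 0, a, m, _, ham, _, β, hβ => (KMem_le hβ).trans (ham 0 le_rfl)
  | k + 1, a, m, hcnt, ham, hkm, β, hβ => by
    have hkm' : (k : Ordinal) ≤ m := le_trans (by exact_mod_cast Nat.cast_le.2 (Nat.le_succ k)) hkm
    have hcnt' : ∀ i ≤ k, a i < Omega1 := fun i hi => hcnt i (hi.trans (Nat.le_succ k))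
    have ham' : ∀ i ≤ k, a i ≤ m := fun i hi => ham i (hi.trans (Nat.le_succ k))
    by_cases h0 : a (k + 1) = 0
    · have hpoly : omegaPolySum a (k + 1) = omegaPolySum a k := by
        show Omega1 ^ ((k + 1 : ℕ) : Ordinal) * a (k + 1) + omegaPolySum a k = _
        rw [h0, mul_zero, zero_add]
      rw [hpoly] at hβ
      exact poly_bound k a m hcnt' ham' hkm' β hβ
    · have hplt : omegaPolySum a k < Omega1 ^ ((k + 1 : ℕ) : Ordinal) := by
        have := poly_lt k a hcnt'
        rwa [show ((k : Ordinal) + 1) = ((k + 1 : ℕ) : Ordinal) by push_cast; rfl] at this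
      have hCNF : Ordinal.CNF Omega1 (omegaPolySum a (k + 1)) =
          (((k + 1 : ℕ) : Ordinal), a (k + 1)) :: Ordinal.CNF Omega1 (omegaPolySum a k) := by
        show Ordinal.CNF Omega1
          (Omega1 ^ ((k + 1 : ℕ) : Ordinal) * a (k + 1) + omegaPolySum a k) = _
        exact CNF_cons one_lt_Omega1 h0 (hcnt (k + 1) le_rfl) hplt
      generalize hX : omegaPolySum a (k + 1) = X at hβ
      rw [hX] at hCNF
      cases hβ with
      | zero => exact zero_le
      | coeff hmem =>
        rw [hCNF, List.mem_cons] at hmem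
        rcases hmem with hmem | hmem
        · rw [Prod.mk.injEq] at hmem
          exact hmem.2 ▸ ham (k + 1) le_rfl
        · exact poly_bound k a m hcnt' ham' hkm' β (KMem.coeff hmem)
      | expo hmem hK =>
        rw [hCNF, List.mem_cons] at hmem
        rcases hmem with hmem | hmem
        · rw [Prod.mk.injEq] at hmem
          refine (KMem_le hK).trans ?_
          rw [hmem.1]
          exact hkm
        · exact poly_bound k a m hcnt' ham' hkm' β (KMem.expo hmem hK)

lemma sigma_form (δ : Ordinal.{0}) :
    ∃ η ≤ δ + 1, sigmaStar δ = Ordinal.omega0 ^ (Ordinal.omega0 ^ η) := by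
  unfold sigmaStar
  split_ifs with h1 h2
  · exact ⟨δ - 1, (Ordinal.sub_le_self δ 1).trans le_self_add, rfl⟩
  · exact ⟨δ + 1, le_rfl, rfl⟩
  · exact ⟨δ, le_self_add, rfl⟩

lemma sigma_form_big {δ : Ordinal.{0}} (hδ : Ordinal.omega0 ≤ δ) :
    ∃ t ≤ (1 : Ordinal), sigmaStar δ = Ordinal.omega0 ^ (Ordinal.omega0 ^ (δ + t)) := by
  unfold sigmaStar
  rw [if_neg (by rintro ⟨-, h⟩; exact absurd hδ (not_le.2 h))]
  split_ifs with h2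
  · exact ⟨1, le_rfl, rfl⟩
  · exact ⟨0, zero_le_one, by rw [add_zero]⟩

end Aux

/-- if `αₙ, …, α₀` are countable ordinals below an epsilon number `γ`,
then `k(σ(Ω^n·αₙ + … + Ω·α₁ + α₀)) < γ`. -/
theorem stmt11 (γ : Ordinal.{0}) (hγ : Ordinal.omega0 ^ γ = γ)
    (nn : ℕ) (a : ℕ → Ordinal.{0})
    (hcnt : ∀ i ≤ nn, a i < Omega1) (hlt : ∀ i ≤ nn, a i < γ) :
    kMax (sigmaStar (omegaPolySum a nn)) < γ := by
  -- basic facts about `γ`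
  have hγ0 : γ ≠ 0 := by
    intro h
    rw [h, Ordinal.opow_zero] at hγ
    exact one_ne_zero hγ
  have hγω : Ordinal.omega0 ≤ γ := by
    by_contra h
    push_neg at h
    have h1 : (1 : Ordinal) ≤ γ := Ordinal.one_le_iff_ne_zero.2 hγ0
    have h2 : Ordinal.omega0 ≤ γ := by
      calc Ordinal.omega0 = Ordinal.omega0 ^ (1 : Ordinal) := (Ordinal.opow_one _).symm
        _ ≤ Ordinal.omega0 ^ γ := Ordinal.opow_le_opow_right Ordinal.omega0_pos h1
        _ = γ := hγ
    exact absurd h2 (not_le.2 h)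
  have one_lt_γ : 1 < γ := Ordinal.one_lt_omega0.trans_le hγω
  have hγpos : (0 : Ordinal) < γ := zero_lt_one.trans one_lt_γ
  have hprin : ∀ x y : Ordinal.{0}, x < γ → y < γ → x + y < γ := by
    intro x y hx hy
    have := Ordinal.principal_add_omega0_opow γ (a := x) (b := y)
      (by rw [hγ]; exact hx) (by rw [hγ]; exact hy)
    rwa [hγ] at this
  have hopowγ : ∀ x : Ordinal.{0}, x < γ → Ordinal.omega0 ^ x < γ := by
    intro x hx
    calc Ordinal.omega0 ^ x < Ordinal.omega0 ^ γ :=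
          (Ordinal.opow_lt_opow_iff_right Ordinal.one_lt_omega0).2 hx
      _ = γ := hγ
  by_cases hB : ∃ j, 1 ≤ j ∧ j ≤ nn ∧ a j ≠ 0
  · -- Case B : `δ ≥ Ω`
    obtain ⟨j, hj1, hjn, hja⟩ := hB
    obtain ⟨n', rfl⟩ : ∃ n', nn = n' + 1 := ⟨nn - 1, by omega⟩
    have hshift : omegaPolySum a (n' + 1) =
        Omega1 * omegaPolySum (fun i => a (i + 1)) n' + a 0 := poly_shift n' a
    set q : Ordinal.{0} := omegaPolySum (fun i => a (i + 1)) n' with hqdef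
    have hq0 : q ≠ 0 := by
      refine poly_ne_zero n' _ (j - 1) (by omega) ?_
      show a (j - 1 + 1) ≠ 0
      rw [show j - 1 + 1 = j from by omega]
      exact hja
    have hq1 : (1 : Ordinal) ≤ q := Ordinal.one_le_iff_ne_zero.2 hq0
    have hΩδ : Omega1 ≤ omegaPolySum a (n' + 1) := by
      rw [hshift]
      exact (Ordinal.le_mul_left Omega1 (pos_iff_ne_zero.2 hq0)).trans
        le_self_add
    have hωδ : Ordinal.omega0 ≤ omegaPolySum a (n' + 1) := omega0_lt_Omega1.le.trans hΩδ
    obtain ⟨t, ht, hform⟩ := sigma_form_big hωδ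
    have htΩ : t < Omega1 := ht.trans_lt one_lt_Omega1
    have hr'Ω : a 0 + t < Omega1 := add_lt_Omega1 (hcnt 0 (by omega)) htΩ
    have hc0 : Ordinal.omega0 ^ (a 0 + t) < Omega1 := opow_lt_Omega1 hr'Ω
    have hc0ne : Ordinal.omega0 ^ (a 0 + t) ≠ 0 := Ordinal.opow_ne_zero _ Ordinal.omega0_ne_zero
    have h1q : 1 + (q - 1) = q := Ordinal.add_sub_cancel_of_le hq1
    have hs0 : Omega1 ^ (q - 1) * Ordinal.omega0 ^ (a 0 + t) ≠ 0 :=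
      mul_ne_zero (Ordinal.opow_ne_zero _ Omega1_ne_zero) hc0ne
    have hαs : sigmaStar (omegaPolySum a (n' + 1)) =
        Omega1 ^ (Omega1 ^ (q - 1) * Ordinal.omega0 ^ (a 0 + t)) := by
      calc sigmaStar (omegaPolySum a (n' + 1))
          = Ordinal.omega0 ^ (Ordinal.omega0 ^ (Omega1 * q + (a 0 + t))) := by
            rw [hform, hshift, add_assoc]
        _ = Ordinal.omega0 ^ (Omega1 ^ q * Ordinal.omega0 ^ (a 0 + t)) := by
            rw [Ordinal.opow_add, Ordinal.opow_mul Ordinal.omega0 Omega1 q, omega0_opow_Omega1]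
        _ = Ordinal.omega0 ^ (Omega1 * (Omega1 ^ (q - 1) * Ordinal.omega0 ^ (a 0 + t))) := by
            have hΩq : Omega1 ^ q = Omega1 * Omega1 ^ (q - 1) := by
              conv_lhs => rw [← h1q]
              rw [Ordinal.opow_add, Ordinal.opow_one]
            rw [hΩq, mul_assoc]
        _ = Omega1 ^ (Omega1 ^ (q - 1) * Ordinal.omega0 ^ (a 0 + t)) := by
            rw [Ordinal.opow_mul Ordinal.omega0 Omega1 _, omega0_opow_Omega1]
    have hCNFα : Ordinal.CNF Omega1
        (Omega1 ^ (Omega1 ^ (q - 1) * Ordinal.omega0 ^ (a 0 + t))) =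
        [(Omega1 ^ (q - 1) * Ordinal.omega0 ^ (a 0 + t), 1)] := by
      have := CNF_cons (b := Omega1) (e := Omega1 ^ (q - 1) * Ordinal.omega0 ^ (a 0 + t))
        (c := 1) (r := 0) one_lt_Omega1 one_ne_zero one_lt_Omega1
        (Ordinal.opow_pos _ Omega1_pos)
      rw [mul_one, add_zero, Ordinal.CNF.zero_right] at this
      exact this
    -- the bound
    set M : Ordinal.{0} := ((Finset.range (n' + 1 + 1)).sup a) ⊔ ((n' + 1 : ℕ) : Ordinal)
      with hMdef
    have haM : ∀ i ≤ n' + 1, a i ≤ M :=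
      fun i hi => (Finset.le_sup (Finset.mem_range.2 (by omega))).trans le_sup_left
    have hnM : ((n' + 1 : ℕ) : Ordinal) ≤ M := le_sup_right
    have hMB : M ≤ Ordinal.omega0 ^ (Ordinal.omega0 ^ (M + 1)) := by
      calc M ≤ M + 1 := le_self_add
        _ ≤ Ordinal.omega0 ^ (M + 1) := Ordinal.right_le_opow _ Ordinal.one_lt_omega0
        _ ≤ Ordinal.omega0 ^ (Ordinal.omega0 ^ (M + 1)) :=
            Ordinal.right_le_opow _ Ordinal.one_lt_omega0
    have h1B : (1 : Ordinal) ≤ Ordinal.omega0 ^ (Ordinal.omega0 ^ (M + 1)) :=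
      Order.one_le_iff_pos.2 (Ordinal.opow_pos _ Ordinal.omega0_pos)
    have hωB : Ordinal.omega0 ≤ Ordinal.omega0 ^ (Ordinal.omega0 ^ (M + 1)) := by
      calc Ordinal.omega0 = Ordinal.omega0 ^ (1 : Ordinal) := (Ordinal.opow_one _).symm
        _ ≤ Ordinal.omega0 ^ (Ordinal.omega0 ^ (M + 1)) :=
          Ordinal.opow_le_opow_right Ordinal.omega0_pos
            (Order.one_le_iff_pos.2 (Ordinal.opow_pos _ Ordinal.omega0_pos))
    have hc0B : Ordinal.omega0 ^ (a 0 + t) ≤ Ordinal.omega0 ^ (Ordinal.omega0 ^ (M + 1)) := by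
      apply Ordinal.opow_le_opow_right Ordinal.omega0_pos
      calc a 0 + t ≤ M + 1 := add_le_add (haM 0 (by omega)) ht
        _ ≤ Ordinal.omega0 ^ (M + 1) := Ordinal.right_le_opow _ Ordinal.one_lt_omega0
    have key : ∀ β, KMem β (Omega1 ^ (Omega1 ^ (q - 1) * Ordinal.omega0 ^ (a 0 + t))) →
        β ≤ Ordinal.omega0 ^ (Ordinal.omega0 ^ (M + 1)) := by
      intro β hβ
      generalize hX : Omega1 ^ (Omega1 ^ (q - 1) * Ordinal.omega0 ^ (a 0 + t)) = X at hβ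
      rw [hX] at hCNFα
      cases hβ with
      | zero => exact zero_le
      | coeff hmem =>
        rw [hCNFα, List.mem_cons] at hmem
        rcases hmem with hmem | hmem
        · rw [Prod.mk.injEq] at hmem
          exact le_of_eq_of_le hmem.2 h1B
        · simp at hmem
      | expo hmem hK =>
        rw [hCNFα, List.mem_cons] at hmem
        rcases hmem with hmem | hmem
        swap
        · simp at hmem
        rw [Prod.mk.injEq] at hmem
        rw [hmem.1] at hK
        -- `hK : KMem β (Ω ^ (q-1) * ω ^ (a 0 + t))`
        by_cases hq'0 : q - 1 = 0
        · rw [hq'0, Ordinal.opow_zero, one_mul] at hK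
          exact (KMem_le hK).trans hc0B
        · have hCNFs : Ordinal.CNF Omega1 (Omega1 ^ (q - 1) * Ordinal.omega0 ^ (a 0 + t)) =
              [(q - 1, Ordinal.omega0 ^ (a 0 + t))] := by
            have := CNF_cons (b := Omega1) (e := q - 1) (c := Ordinal.omega0 ^ (a 0 + t))
              (r := 0) one_lt_Omega1 hc0ne hc0 (Ordinal.opow_pos _ Omega1_pos)
            rw [add_zero, Ordinal.CNF.zero_right] at this
            exact this
          generalize hY : Omega1 ^ (q - 1) * Ordinal.omega0 ^ (a 0 + t) = Y at hK
          rw [hY] at hCNFs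
          cases hK with
          | zero => exact zero_le
          | coeff hmem2 =>
            rw [hCNFs, List.mem_cons] at hmem2
            rcases hmem2 with hmem2 | hmem2
            · rw [Prod.mk.injEq] at hmem2
              exact le_of_eq_of_le hmem2.2 hc0B
            · simp at hmem2
          | expo hmem2 hK2 =>
            rw [hCNFs, List.mem_cons] at hmem2
            rcases hmem2 with hmem2 | hmem2
            swap
            · simp at hmem2
            rw [Prod.mk.injEq] at hmem2
            rw [hmem2.1] at hK2
            -- `hK2 : KMem β (q - 1)`
            by_cases hqω : Ordinal.omega0 ≤ q
            · have hq'q : q - 1 = q := by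
                conv_lhs => rw [← Ordinal.one_add_of_omega0_le hqω]
                exact Ordinal.add_sub_cancel 1 q
              rw [hq'q, hqdef] at hK2
              refine (poly_bound n' (fun i => a (i + 1)) M ?_ ?_ ?_ β hK2).trans hMB
              · exact fun i hi => hcnt (i + 1) (by omega)
              · exact fun i hi => haM (i + 1) (by omega)
              · exact le_trans (by exact_mod_cast Nat.cast_le.2 (by omega : n' ≤ n' + 1)) hnM
            · push_neg at hqω
              calc β ≤ q - 1 := KMem_le hK2
                _ ≤ q := Ordinal.sub_le_self q 1
                _ ≤ Ordinal.omega0 := hqω.le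
                _ ≤ _ := hωB
    have hk : kMax (sigmaStar (omegaPolySum a (n' + 1))) ≤
        Ordinal.omega0 ^ (Ordinal.omega0 ^ (M + 1)) := by
      rw [kMax, hαs]
      exact csSup_le' fun β hβ => key β hβ
    refine hk.trans_lt ?_
    have hMγ : M < γ := by
      rw [hMdef]
      apply max_lt
      · rw [Finset.sup_lt_iff hγpos]
        intro i hi
        exact hlt i (Nat.lt_succ_iff.1 (Finset.mem_range.1 hi))
      · exact (Ordinal.nat_lt_omega0 _).trans_le hγω
    exact hopowγ _ (hopowγ _ (hprin M 1 hMγ one_lt_γ))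
  · -- Case A : `δ = a 0 < Ω`
    push_neg at hB
    have hδ : omegaPolySum a nn = a 0 := poly_eq_a0 nn a hB
    obtain ⟨η, hη, hform⟩ := sigma_form (omegaPolySum a nn)
    have hbound : kMax (sigmaStar (omegaPolySum a nn)) ≤ sigmaStar (omegaPolySum a nn) := by
      rw [kMax]
      exact csSup_le' fun β hβ => KMem_le hβ
    refine hbound.trans_lt ?_
    rw [hform]
    have hηγ : η < γ := by
      refine hη.trans_lt ?_
      rw [hδ]
      exact hprin (a 0) 1 (hlt 0 (by omega)) one_lt_γ
    exact hopowγ _ (hopowγ _ hηγ)
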